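/- The real projective plane ℝP², equipped with its standard ℤ₂²-action, admits a ℤ₂²-equivariant triangulation with exactly 6 vertices, none of which is a fixed point of the action. -/

import Mathlib

open Geometry
open scoped LinearAlgebra.Projectivization

/-- A *triangulation* of a topological space `M`: a finite geometric simplicial complex in some
real Euclidean space together with a homeomorphism from its underlying polyhedron (the union of
its simplices, with the subspace topology) to `M`. -/
structure Triangulation (M : Type*) [TopologicalSpace M] where
  /-- the dimension of the ambient Euclidean space -/
  dim : ℕ
  /-- the simplicial complex -/
  complex : Geometry.SimplicialComplex ℝ (EuclideanSpace ℝ (Fin dim))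
  /-- the complex has finitely many faces -/
  finite_faces : complex.faces.Finite
  /-- a homeomorphism from the polyhedron to `M` -/
  homeo : complex.space ≃ₜ M

/-- A triangulation `T` of `M` is *equivariant* with respect to an action `ρ` of `G` on `M` if
for each `g : G` the self-map `h⁻¹ ∘ (ρ g) ∘ h` of the polyhedron maps each geometric simplex of
the complex onto a geometric simplex of the complex. -/
def Triangulation.IsEquivariant {M : Type*} [TopologicalSpace M] {G : Type*}
    (ρ : G → M → M) (T : Triangulation M) : Prop :=
  ∀ g : G, ∀ s ∈ T.complex.faces, ∃ t ∈ T.complex.faces,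
    (fun x : T.complex.space =>
        (T.homeo.symm (ρ g (T.homeo x)) : EuclideanSpace ℝ (Fin T.dim))) ''
      {x : T.complex.space |
        (x : EuclideanSpace ℝ (Fin T.dim)) ∈ convexHull ℝ (s : Set (EuclideanSpace ℝ (Fin T.dim)))}
      = convexHull ℝ (t : Set (EuclideanSpace ℝ (Fin T.dim)))

/-- The number of `i`-dimensional simplices of a triangulation (simplices with `i + 1` vertices). -/
noncomputable def Triangulation.fvec {M : Type*} [TopologicalSpace M] (T : Triangulation M)
    (i : ℕ) : ℕ :=
  {s ∈ T.complex.faces | s.card = i + 1}.ncard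

/-- The projectivization of a topological vector space carries the quotient topology. -/
instance Projectivization.instTopologicalSpace {K V : Type*} [DivisionRing K] [AddCommGroup V]
    [Module K V] [TopologicalSpace V] : TopologicalSpace (ℙ K V) :=
  inferInstanceAs (TopologicalSpace (Quotient (projectivizationSetoid K V)))

/-- The sign `(−1)^a` attached to an element `a` of `ℤ/2`. -/
noncomputable def sgn (a : ZMod 2) : ℝ := if a = 0 then 1 else -1

lemma sgn_ne_zero (a : ZMod 2) : sgn a ≠ 0 := by unfold sgn; split <;> norm_num

/-- Rescaling each coordinate by a nonzero scalar, as a linear equivalence. -/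
noncomputable def scaleEquiv {ι : Type*} (ε : ι → ℝ) (hε : ∀ i, ε i ≠ 0) :
    (ι → ℝ) ≃ₗ[ℝ] (ι → ℝ) where
  toFun v i := ε i * v i
  invFun v i := (ε i)⁻¹ * v i
  left_inv v := by
    funext i; show (ε i)⁻¹ * (ε i * v i) = v i
    rw [← mul_assoc, inv_mul_cancel₀ (hε i), one_mul]
  right_inv v := by
    funext i; show ε i * ((ε i)⁻¹ * v i) = v i
    rw [← mul_assoc, mul_inv_cancel₀ (hε i), one_mul]
  map_add' u v := by funext i; simp [Pi.add_apply]; ring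
  map_smul' c v := by funext i; simp [Pi.smul_apply, smul_eq_mul]; ring

/-- The sign vector `(1, (−1)^{g₁}, …, (−1)^{gₙ})` attached to `g ∈ ℤ₂ⁿ`. -/
noncomputable def stdSign (n : ℕ) (g : Fin n → ZMod 2) : Fin (n + 1) → ℝ :=
  Fin.cons 1 fun j => sgn (g j)

lemma stdSign_ne_zero (n : ℕ) (g : Fin n → ZMod 2) : ∀ i, stdSign n g i ≠ 0 := by
  intro i
  induction i using Fin.cases with
  | zero => simp [stdSign]
  | succ j => simp [stdSign, sgn_ne_zero]

/-- The standard action of `ℤ₂ⁿ` on `ℝPⁿ = ℙ(ℝ^{n+1})`: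
`(g₁,…,gₙ) · [x₀:x₁:…:xₙ] = [x₀:(−1)^{g₁}x₁:…:(−1)^{gₙ}xₙ]`. -/
noncomputable def rpStdAction (n : ℕ) (g : Fin n → ZMod 2) :
    ℙ ℝ (Fin (n + 1) → ℝ) → ℙ ℝ (Fin (n + 1) → ℝ) :=
  Projectivization.map ((scaleEquiv (stdSign n g) (stdSign_ne_zero n g)).toLinearMap)
    (scaleEquiv (stdSign n g) (stdSign_ne_zero n g)).injective

/-- The standard action of `ℤ₂² = ℤ/2 × ℤ/2` on the real projective plane
`ℝP² = ℙ(ℝ³)`: `(g₁,g₂) · [x₀:x₁:x₂] = [x₀:(−1)^{g₁}x₁:(−1)^{g₂}x₂]`. -/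
noncomputable def rp2StdAction (g : ZMod 2 × ZMod 2) :
    ℙ ℝ (Fin 3 → ℝ) → ℙ ℝ (Fin 3 → ℝ) :=
  rpStdAction 2 ![g.1, g.2]


section RP2aux
namespace RP2
noncomputable section

def Vz : Fin 12 → Fin 3 → ℤ :=
  ![![0, 1, 2],
    ![0, 1, (-2)],
    ![2, 0, 1],
    ![(-2), 0, 1],
    ![1, 2, 0],
    ![1, (-2), 0],
    ![0, (-1), (-2)],
    ![0, (-1), 2],
    ![(-2), 0, (-1)],
    ![2, 0, (-1)],
    ![(-1), (-2), 0],
    ![(-1), 2, 0]]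

def antp : Fin 12 → Fin 12 := ![6,7,8,9,10,11,0,1,2,3,4,5]

def clsOf : Fin 12 → Fin 6 := ![0,1,2,3,4,5,0,1,2,3,4,5]

def UI : Fin 10 → Fin 6 → Option (Fin 12) :=
  ![![some 0, none, some 2, none, some 4, none],
    ![some 0, some 7, some 2, none, none, none],
    ![some 0, some 7, none, some 3, none, none],
    ![some 0, none, none, some 3, none, some 11],
    ![some 0, none, none, none, some 4, some 11],
    ![none, some 1, none, some 9, some 4, none],
    ![none, some 1, none, none, some 4, some 11],
    ![none, some 1, some 8, none, none, some 11],
    ![none, none, some 2, some 9, some 4, none],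
    ![none, none, some 2, some 9, none, some 5]]

def Mz : Fin 10 → Fin 6 → Fin 3 → ℤ :=
  ![![![(-16), 8, 32], ![0, 0, 0], ![32, (-16), 8], ![0, 0, 0], ![8, 32, (-16)], ![0, 0, 0]],
    ![![(-9), 36, 18], ![(-9), (-36), 18], ![36, 0, 0], ![0, 0, 0], ![0, 0, 0], ![0, 0, 0]],
    ![![9, 36, 18], ![9, (-36), 18], ![0, 0, 0], ![(-36), 0, 0], ![0, 0, 0], ![0, 0, 0]],
    ![![16, 8, 32], ![0, 0, 0], ![0, 0, 0], ![(-32), (-16), 8], ![0, 0, 0], ![(-8), 32, (-16)]],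
    ![![0, 0, 36], ![0, 0, 0], ![0, 0, 0], ![0, 0, 0], ![36, 18, (-9)], ![(-36), 18, (-9)]],
    ![![0, 0, 0], ![(-16), 8, (-32)], ![0, 0, 0], ![32, (-16), (-8)], ![8, 32, 16], ![0, 0, 0]],
    ![![0, 0, 0], ![0, 0, (-36)], ![0, 0, 0], ![0, 0, 0], ![36, 18, 9], ![(-36), 18, 9]],
    ![![0, 0, 0], ![16, 8, (-32)], ![(-32), (-16), (-8)], ![0, 0, 0], ![0, 0, 0], ![(-8), 32, 16]],
    ![![0, 0, 0], ![0, 0, 0], ![18, (-9), 36], ![18, (-9), (-36)], ![0, 36, 0], ![0, 0, 0]],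
    ![![0, 0, 0], ![0, 0, 0], ![18, 9, 36], ![18, 9, (-36)], ![0, 0, 0], ![0, (-36), 0]]]

def Nz : Fin 10 → Fin 3 → ℤ :=
  ![![24, 24, 24],
    ![18, 0, 36],
    ![(-18), 0, 36],
    ![(-24), 24, 24],
    ![0, 36, 18],
    ![24, 24, (-24)],
    ![0, 36, (-18)],
    ![(-24), 24, (-24)],
    ![36, 18, 0],
    ![36, (-18), 0]]

def nbF : Fin 10 → Fin 6 → Fin 10 :=
  ![![8, 0, 4, 0, 1, 0],
    ![7, 0, 2, 0, 0, 0],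
    ![5, 3, 0, 1, 0, 0],
    ![9, 0, 0, 4, 0, 2],
    ![6, 0, 0, 0, 3, 0],
    ![0, 8, 0, 6, 2, 0],
    ![0, 4, 0, 0, 7, 5],
    ![0, 9, 6, 0, 0, 1],
    ![0, 0, 5, 0, 9, 0],
    ![0, 0, 3, 7, 0, 8]]

def Sz : Fin 10 → Fin 6 → ℤ :=
  ![![1, 1, 1, 1, 1, 1],
    ![(-1), 1, 1, 1, 1, 1],
    ![(-1), 1, 1, 1, 1, 1],
    ![(-1), 1, 1, 1, 1, 1],
    ![1, 1, 1, 1, 1, 1],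
    ![1, 1, 1, 1, (-1), 1],
    ![1, 1, 1, 1, 1, 1],
    ![1, (-1), 1, 1, 1, (-1)],
    ![1, 1, 1, 1, 1, 1],
    ![1, 1, (-1), (-1), 1, 1]]

def Tp : Fin 10 → Fin 6 → ℤ :=
  ![![4, 1, 4, 1, 4, 1],
    ![3, 3, 1, 1, 1, 1],
    ![3, 3, 1, 1, 1, 1],
    ![4, 1, 1, 4, 1, 4],
    ![1, 1, 1, 1, 3, 3],
    ![1, 4, 1, 4, 4, 1],
    ![1, 1, 1, 1, 3, 3],
    ![1, 4, 4, 1, 1, 4],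
    ![1, 1, 3, 3, 1, 1],
    ![1, 1, 3, 3, 1, 1]]

def Tq : Fin 10 → Fin 6 → ℤ :=
  ![![3, 1, 3, 1, 3, 1],
    ![2, 2, 1, 1, 1, 1],
    ![2, 2, 1, 1, 1, 1],
    ![3, 1, 1, 3, 1, 3],
    ![1, 1, 1, 1, 2, 2],
    ![1, 3, 1, 3, 3, 1],
    ![1, 1, 1, 1, 2, 2],
    ![1, 3, 3, 1, 1, 3],
    ![1, 1, 2, 2, 1, 1],
    ![1, 1, 2, 2, 1, 1]]

def gsz : Fin 4 → Fin 3 → ℤ := ![![1,1,1],![1,1,(-1)],![1,(-1),1],![1,(-1),(-1)]]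

def gact : Fin 4 → Fin 12 → Fin 12 :=
  ![![0, 1, 2, 3, 4, 5, 6, 7, 8, 9, 10, 11],
    ![1, 0, 9, 8, 4, 5, 7, 6, 3, 2, 10, 11],
    ![7, 6, 2, 3, 5, 4, 1, 0, 8, 9, 11, 10],
    ![6, 7, 9, 8, 5, 4, 0, 1, 3, 2, 11, 10]]

def sigmaF : Fin 4 → Fin 10 → Fin 10 :=
  ![![0, 1, 2, 3, 4, 5, 6, 7, 8, 9],
    ![5, 2, 1, 7, 6, 0, 4, 3, 8, 9],
    ![7, 1, 2, 5, 6, 3, 4, 0, 9, 8],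
    ![3, 2, 1, 0, 4, 7, 6, 5, 9, 8]]

def epsB : Fin 4 → Fin 10 → Bool :=
  ![![true, true, true, true, true, true, true, true, true, true],
    ![true, false, false, true, true, true, true, true, true, true],
    ![false, true, true, false, false, false, false, false, true, true],
    ![false, false, false, false, false, false, false, false, true, true]]

def piF : Fin 4 → Fin 6 → Fin 6 :=
  ![![0, 1, 2, 3, 4, 5],
    ![1, 0, 3, 2, 4, 5],
    ![1, 0, 2, 3, 5, 4],
    ![0, 1, 3, 2, 5, 4]]

def SrelB : Fin 10 → Fin 10 → Bool :=
  ![![true, true, true, true, true, true, true, false, true, true],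
    ![true, true, true, true, true, false, false, false, true, true],
    ![true, true, true, true, true, false, false, false, false, false],
    ![true, true, true, true, true, false, true, true, false, false],
    ![true, true, true, true, true, true, true, true, true, false],
    ![true, false, false, false, true, true, true, true, true, true],
    ![true, false, false, true, true, true, true, true, true, false],
    ![false, false, false, true, true, true, true, true, false, false],
    ![true, true, false, false, true, true, true, false, true, true],
    ![true, true, false, false, false, true, false, false, true, true]]


def UVz (k : Fin 10) (c : Fin 6) : Fin 3 → ℤ := (UI k c).elim 0 Vz
def dz (a b : Fin 3 → ℤ) : ℤ := a 0 * b 0 + a 1 * b 1 + a 2 * b 2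

/- integer facts, by kernel computation -/
lemma z_dual : ∀ (k : Fin 10) (c c' : Fin 6),
    dz (Mz k c) (UVz k c') = if c = c' ∧ (UI k c).isSome = true then 72 else 0 := by decide
lemma z_cram : ∀ (k : Fin 10) (i j : Fin 3),
    (∑ c : Fin 6, Mz k c i * UVz k c j) = if i = j then 72 else 0 := by decide
lemma z_nn : ∀ (k : Fin 10) (i : Fin 3), Nz k i = ∑ c : Fin 6, Mz k c i := by decide
lemma z_bnd : ∀ (k : Fin 10) (t : Fin 12),
    -72 ≤ dz (Nz k) (Vz t) ∧ dz (Nz k) (Vz t) ≤ 72 := by decide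
lemma z_claA : ∀ (k : Fin 10) (t : Fin 12),
    dz (Nz k) (Vz t) = 72 → UI k (clsOf t) = some t := by decide
lemma z_claB : ∀ (k : Fin 10) (t : Fin 12),
    dz (Nz k) (Vz t) = -72 → UI k (clsOf t) = some (antp t) := by decide
lemma z_nbr : ∀ (k : Fin 10) (c : Fin 6), (UI k c).isSome = true → ∀ (t : Fin 3),
    Tq k c * Mz k c t = Tp k c * (Nz k t - Sz k c * Nz (nbF k c) t) := by decide
lemma z_Tppos : ∀ (k : Fin 10) (c : Fin 6), 0 < Tp k c := by decide
lemma z_Tqpos : ∀ (k : Fin 10) (c : Fin 6), 0 < Tq k c := by decide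
lemma z_Spm : ∀ (k : Fin 10) (c : Fin 6), Sz k c = 1 ∨ Sz k c = -1 := by decide
lemma z_mUz : ∀ (k : Fin 10) (c : Fin 6), UI k c = none → ∀ t, Mz k c t = 0 := by decide
lemma z_vant : ∀ (t : Fin 12) (j : Fin 3), Vz (antp t) j = -Vz t j := by decide
lemma z_gact : ∀ (gi : Fin 4) (t : Fin 12) (j : Fin 3),
    Vz (gact gi t) j = gsz gi j * Vz t j := by decide
lemma uactD : ∀ (gi : Fin 4) (k : Fin 10) (c : Fin 6),
    UI (sigmaF gi k) (piF gi c) =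
      Option.map (fun t => if epsB gi k then gact gi t else antp (gact gi t)) (UI k c) := by decide
lemma SrelU : ∀ (k k' : Fin 10) (c : Fin 6), (UI k c).isSome = true → (UI k' c).isSome = true →
    UI k c = if SrelB k k' then UI k' c else Option.map antp (UI k' c) := by decide
lemma clsUI : ∀ (k : Fin 10) (c : Fin 6) (t : Fin 12), UI k c = some t → clsOf t = c := by decide
lemma allcls : ∀ c : Fin 6, ∃ k, (UI k c).isSome = true := by decide
lemma faceNE : ∀ k : Fin 10, ∃ c, (UI k c).isSome = true := by decide
lemma piFinvol : ∀ (gi : Fin 4) (c : Fin 6), piF gi (piF gi c) = c := by decide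
lemma z_gsz0 : ∀ gi : Fin 4, gsz gi 0 = 1 := by decide
lemma z_gszpm : ∀ (gi : Fin 4) (j : Fin 3), gsz gi j = 1 ∨ gsz gi j = -1 := by decide
lemma z_span : Nz 1 = ![18, 0, 36] ∧ Nz 2 = ![-18, 0, 36] ∧ Nz 4 = ![0, 36, 18] := by decide

/- real-valued data -/
def dot (a b : Fin 3 → ℝ) : ℝ := a 0 * b 0 + a 1 * b 1 + a 2 * b 2
def V12 (t : Fin 12) : Fin 3 → ℝ := fun j => (Vz t j : ℝ)
def mU (k : Fin 10) (c : Fin 6) : Fin 3 → ℝ := fun j => (Mz k c j : ℝ) / 72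
def nn (k : Fin 10) : Fin 3 → ℝ := fun j => (Nz k j : ℝ) / 72
def UV (k : Fin 10) (c : Fin 6) : Fin 3 → ℝ := (UI k c).elim 0 V12
def nbT (k : Fin 10) (c : Fin 6) : ℝ := (Tp k c : ℝ) / (Tq k c : ℝ)
def nbS (k : Fin 10) (c : Fin 6) : ℝ := (Sz k c : ℝ)
def gsgn (gi : Fin 4) : Fin 3 → ℝ := fun j => (gsz gi j : ℝ)
def epsF (gi : Fin 4) (k : Fin 10) : ℝ := if epsB gi k then 1 else -1

lemma dot_eq_sum (a b : Fin 3 → ℝ) : dot a b = ∑ i : Fin 3, a i * b i := by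
  simp [dot, Fin.sum_univ_three]
lemma dot_smul (f : Fin 3 → ℝ) (a : ℝ) (v : Fin 3 → ℝ) : dot f (a • v) = a * dot f v := by
  simp [dot, Pi.smul_apply, smul_eq_mul]; ring
lemma UV_cast (k : Fin 10) (c : Fin 6) (j : Fin 3) : UV k c j = ((UVz k c j : ℤ) : ℝ) := by
  cases h : UI k c <;> simp [UV, UVz, h, V12]
lemma UV_none {k c} (h : UI k c = none) : UV k c = 0 := by simp [UV, h]
lemma UV_some {k c t} (h : UI k c = some t) : UV k c = V12 t := by simp [UV, h]

lemma dot_mU_UV (k : Fin 10) (c c' : Fin 6) :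
    dot (mU k c) (UV k c') = if c = c' ∧ (UI k c).isSome = true then 1 else 0 := by
  have h := z_dual k c c'
  have h2 : dot (mU k c) (UV k c') = (dz (Mz k c) (UVz k c') : ℝ) / 72 := by
    simp only [dot, dz, mU, UV_cast]; push_cast; ring
  rw [h2, h]; split_ifs <;> norm_num

lemma dot_nn_V (k : Fin 10) (t : Fin 12) :
    dot (nn k) (V12 t) = (dz (Nz k) (Vz t) : ℝ) / 72 := by
  simp only [dot, dz, nn, V12]; push_cast; ring

lemma bndV (k : Fin 10) (t : Fin 12) : |dot (nn k) (V12 t)| ≤ 1 := by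
  rw [dot_nn_V, abs_le]
  obtain ⟨hl, hr⟩ := z_bnd k t
  have hl' : ((-72 : ℤ) : ℝ) ≤ ((dz (Nz k) (Vz t) : ℤ) : ℝ) := by exact_mod_cast hl
  have hr' : ((dz (Nz k) (Vz t) : ℤ) : ℝ) ≤ ((72 : ℤ) : ℝ) := by exact_mod_cast hr
  push_cast at hl' hr'
  constructor <;> [linarith; linarith]

lemma claA_r (k : Fin 10) (t : Fin 12) (h : dot (nn k) (V12 t) = 1) : UI k (clsOf t) = some t := by
  apply z_claA
  rw [dot_nn_V] at h
  have : (dz (Nz k) (Vz t) : ℝ) = 72 := by field_simp at h; exact_mod_cast h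
  exact_mod_cast this

lemma claB_r (k : Fin 10) (t : Fin 12) (h : dot (nn k) (V12 t) = -1) :
    UI k (clsOf t) = some (antp t) := by
  apply z_claB
  rw [dot_nn_V] at h
  have : (dz (Nz k) (Vz t) : ℝ) = -72 := by field_simp at h; linarith
  exact_mod_cast this

lemma mid (k : Fin 10) (i j : Fin 3) :
    (∑ c : Fin 6, mU k c i * UV k c j) = if i = j then 1 else 0 := by
  have : (∑ c : Fin 6, mU k c i * UV k c j)
      = ((∑ c : Fin 6, Mz k c i * UVz k c j : ℤ) : ℝ) / 72 := by
    push_cast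
    rw [Finset.sum_div]
    refine Finset.sum_congr rfl fun c _ => ?_
    rw [mU, UV_cast]; push_cast; ring
  rw [this, z_cram]; split_ifs <;> norm_num

lemma nn_sum (k : Fin 10) (i : Fin 3) : nn k i = ∑ c : Fin 6, mU k c i := by
  have : nn k i = ((∑ c : Fin 6, Mz k c i : ℤ) : ℝ) / 72 := by
    rw [nn, z_nn]
  rw [this]; push_cast; rw [Finset.sum_div]; rfl

lemma dot_nn_sum (k : Fin 10) (v : Fin 3 → ℝ) :
    dot (nn k) v = ∑ c : Fin 6, dot (mU k c) v := by
  simp only [dot_eq_sum]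
  rw [Finset.sum_comm]
  refine Finset.sum_congr rfl fun i _ => ?_
  rw [nn_sum, Finset.sum_mul]

lemma nbr_r (k : Fin 10) (c : Fin 6) (hc : (UI k c).isSome = true) (t : Fin 3) :
    mU k c t = nbT k c * (nn k t - nbS k c * nn (nbF k c) t) := by
  have h := z_nbr k c hc t
  have hq : (0 : ℝ) < (Tq k c : ℝ) := by exact_mod_cast z_Tqpos k c
  have hcast : ((Tq k c : ℤ) : ℝ) * ((Mz k c t : ℤ) : ℝ)
      = ((Tp k c : ℤ) : ℝ) * (((Nz k t : ℤ) : ℝ) - ((Sz k c : ℤ) : ℝ) * ((Nz (nbF k c) t : ℤ) : ℝ)) := by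
    exact_mod_cast congrArg (fun z : ℤ => (z : ℝ)) h
  rw [mU, nbT, nbS, nn, nn]
  field_simp
  nlinarith [hcast]

lemma nbT_pos (k : Fin 10) (c : Fin 6) : 0 < nbT k c := by
  have h1 : (0:ℝ) < (Tp k c : ℝ) := by exact_mod_cast z_Tppos k c
  have h2 : (0:ℝ) < (Tq k c : ℝ) := by exact_mod_cast z_Tqpos k c
  exact div_pos h1 h2

lemma nbS_pm (k : Fin 10) (c : Fin 6) : nbS k c = 1 ∨ nbS k c = -1 := by
  rcases z_Spm k c with h | h <;> [left; right] <;> rw [nbS, h] <;> norm_num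

lemma mUz_r (k : Fin 10) (c : Fin 6) (h : UI k c = none) : mU k c = 0 := by
  funext t; rw [mU, z_mUz k c h t]; norm_num

lemma vant_r (t : Fin 12) (j : Fin 3) : V12 (antp t) j = -V12 t j := by
  rw [V12, V12, z_vant]; push_cast; ring

lemma gact_r (gi : Fin 4) (t : Fin 12) (j : Fin 3) :
    V12 (gact gi t) j = gsgn gi j * V12 t j := by
  rw [V12, V12, gsgn, z_gact]; push_cast; ring

lemma gsgn_pm (gi : Fin 4) (j : Fin 3) : gsgn gi j = 1 ∨ gsgn gi j = -1 := by
  rcases z_gszpm gi j with h | h <;> [left; right] <;> rw [gsgn, h] <;> norm_num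

lemma gsgn_ne (gi : Fin 4) (j : Fin 3) : gsgn gi j ≠ 0 := by
  rcases gsgn_pm gi j with h | h <;> rw [h] <;> norm_num

lemma spanN (v : Fin 3 → ℝ) (h : ∀ k, dot (nn k) v = 0) : v = 0 := by
  obtain ⟨h1z, h2z, h4z⟩ := z_span
  have h1 := h 1; have h2 := h 2; have h4 := h 4
  rw [dot] at h1 h2 h4
  rw [show nn 1 0 = ((Nz 1 0 : ℤ):ℝ)/72 from rfl, show nn 1 1 = ((Nz 1 1 : ℤ):ℝ)/72 from rfl,
    show nn 1 2 = ((Nz 1 2 : ℤ):ℝ)/72 from rfl, h1z] at h1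
  rw [show nn 2 0 = ((Nz 2 0 : ℤ):ℝ)/72 from rfl, show nn 2 1 = ((Nz 2 1 : ℤ):ℝ)/72 from rfl,
    show nn 2 2 = ((Nz 2 2 : ℤ):ℝ)/72 from rfl, h2z] at h2
  rw [show nn 4 0 = ((Nz 4 0 : ℤ):ℝ)/72 from rfl, show nn 4 1 = ((Nz 4 1 : ℤ):ℝ)/72 from rfl,
    show nn 4 2 = ((Nz 4 2 : ℤ):ℝ)/72 from rfl, h4z] at h4
  norm_num [Matrix.cons_val_zero, Matrix.cons_val_one, Matrix.cons_val_two] at h1 h2 h4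
  have e0 : v 0 = 0 := by linarith
  have e1 : v 1 = 0 := by linarith
  have e2 : v 2 = 0 := by linarith
  funext j
  fin_cases j
  · exact e0
  · exact e1
  · exact e2

end
end RP2
end RP2aux

section RP2B
namespace RP2
noncomputable section
open scoped Classical

abbrev EE := EuclideanSpace ℝ (Fin 6)

def pt (c : Fin 6) : EE := EuclideanSpace.single c 1

lemma pt_apply (c c' : Fin 6) : pt c c' = if c' = c then 1 else 0 := by
  rw [pt, EuclideanSpace.single_apply]

lemma pt_inj : Function.Injective pt := by
  intro a b h
  have := congrFun (congrArg WithLp.ofLp h) a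
  rw [pt_apply, pt_apply, if_pos rfl] at this
  by_contra hab
  rw [if_neg (fun hh => hab hh)] at this
  norm_num at this

lemma sum_apply' {ι : Type*} (s : Finset ι) (f : ι → EE) (c : Fin 6) :
    (∑ i ∈ s, f i) c = ∑ i ∈ s, f i c := by
  classical
  induction s using Finset.cons_induction with
  | empty => rfl
  | cons a s ha ih =>
    rw [Finset.sum_cons, Finset.sum_cons, ← ih]
    rfl

lemma smul_apply' (r : ℝ) (x : EE) (c : Fin 6) : (r • x) c = r * x c := rfl

theorem memConvS {S : Finset (Fin 6)} {x : EE} :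
    x ∈ convexHull ℝ ↑(S.image pt) ↔
      (∀ c, 0 ≤ x c) ∧ (∑ c, x c) = 1 ∧ ∀ c ∉ S, x c = 0 := by
  classical
  constructor
  · intro hx
    obtain ⟨w, hw0, hw1, hwx⟩ := Finset.mem_convexHull'.1 hx
    rw [Finset.sum_image (fun a _ b _ h => pt_inj h)] at hw1 hwx
    have hco : ∀ c', x c' = if c' ∈ S then w (pt c') else 0 := by
      intro c'
      rw [← hwx, sum_apply']
      simp only [smul_apply']
      have hstep : ∀ c ∈ S, w (pt c) * pt c c' = if c = c' then w (pt c) else 0 := by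
        intro c _
        rw [pt_apply]
        by_cases h : c = c'
        · rw [if_pos h.symm, mul_one, if_pos h]
        · rw [if_neg (fun hh => h hh.symm), mul_zero, if_neg h]
      rw [Finset.sum_congr rfl hstep, Finset.sum_ite_eq' S c' fun c => w (pt c)]
    refine ⟨?_, ?_, ?_⟩
    · intro c
      rw [hco c]
      by_cases hc : c ∈ S
      · rw [if_pos hc]
        exact hw0 _ (Finset.mem_image_of_mem pt hc)
      · rw [if_neg hc]
    · rw [Finset.sum_congr rfl fun c _ => hco c, Finset.sum_ite_mem, Finset.univ_inter]
      exact hw1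
    · intro c hc
      rw [hco c, if_neg hc]
  · rintro ⟨h0, h1, hz⟩
    have hS1 : ∑ c ∈ S, x c = 1 := by
      rw [← h1]
      exact Finset.sum_subset (Finset.subset_univ S) fun c _ hc => hz c hc
    have hx : x = ∑ c ∈ S, x c • pt c := by
      ext c'
      rw [sum_apply']
      simp only [smul_apply']
      have hstep : ∀ c ∈ S, x c * pt c c' = if c = c' then x c else 0 := by
        intro c _
        rw [pt_apply]
        by_cases h : c = c'
        · rw [if_pos h.symm, mul_one, if_pos h]
        · rw [if_neg (fun hh => h hh.symm), mul_zero, if_neg h]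
      rw [Finset.sum_congr rfl hstep, Finset.sum_ite_eq' S c' fun c => x c]
      by_cases hc : c' ∈ S
      · rw [if_pos hc]
      · rw [if_neg hc, hz c' hc]
    have hm := Finset.centerMass_mem_convexHull S (w := fun c => x c) (z := pt)
      (fun c _ => h0 c) (hS1 ▸ one_pos)
      (fun c hc => Finset.mem_coe.2 (Finset.mem_image_of_mem pt hc))
    rwa [Finset.centerMass_eq_of_sum_1 _ _ hS1, ← hx] at hm

/-! ### the simplicial complex -/

def clsSet (k : Fin 10) : Finset (Fin 6) := Finset.univ.filter fun c => (UI k c).isSome = true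

lemma mem_clsSet {k c} : c ∈ clsSet k ↔ (UI k c).isSome = true := by simp [clsSet]

def TriF (k : Fin 10) : Finset EE := (clsSet k).image pt

def faces : Set (Finset EE) :=
  {F | ∃ S : Finset (Fin 6), ∃ k, S.Nonempty ∧ S ⊆ clsSet k ∧ F = S.image pt}

lemma aiPt : AffineIndependent ℝ pt := by
  rw [affineIndependent_iff]
  intro s w _ hsum e he
  have := congrFun (congrArg WithLp.ofLp hsum) e
  rw [sum_apply'] at this
  simp only [smul_apply'] at this
  have hstep : ∀ c ∈ s, w c * pt c e = if c = e then w c else 0 := by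
    intro c _
    rw [pt_apply]
    by_cases h : c = e
    · rw [if_pos h.symm, mul_one, if_pos h]
    · rw [if_neg (fun hh => h hh.symm), mul_zero, if_neg h]
  rw [Finset.sum_congr rfl hstep, Finset.sum_ite_eq' s e w, if_pos he] at this
  exact this

def clsOfPt (y : EE) : Fin 6 := Function.invFun pt y

lemma clsOfPt_pt (c : Fin 6) : clsOfPt (pt c) = c := Function.leftInverse_invFun pt_inj c

lemma aiAux (S : Finset (Fin 6)) : AffineIndependent ℝ ((↑) : ↑(S.image pt) → EE) := by
  have hrep : ∀ y : ↑(S.image pt), pt (clsOfPt (y : EE)) = (y : EE) := by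
    rintro ⟨y, hy⟩
    obtain ⟨c, _, rfl⟩ := Finset.mem_image.1 hy
    rw [clsOfPt_pt]
  have hemb : Function.Injective (fun y : ↑(S.image pt) => clsOfPt (y : EE)) := by
    intro a b h
    simp only [] at h
    apply Subtype.ext
    rw [← hrep a, ← hrep b, h]
  have : ((↑) : ↑(S.image pt) → EE) = pt ∘ fun y : ↑(S.image pt) => clsOfPt (y : EE) := by
    funext y
    exact (hrep y).symm
  rw [this]
  exact aiPt.comp_embedding ⟨_, hemb⟩

def SC : Geometry.SimplicialComplex ℝ EE where
  faces := faces
  isRelLowerSet_faces := by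
    rintro s ⟨S, k, hne, hsub, rfl⟩
    refine ⟨hne.image pt, fun t hts htne => ?_⟩
    classical
    obtain ⟨S', hS', rfl⟩ := Finset.subset_image_iff.1 hts
    refine ⟨S', k, ?_, hS'.trans hsub, rfl⟩
    exact Finset.image_nonempty.1 htne
  indep := by
    rintro s ⟨S, k, -, -, rfl⟩
    exact aiAux S

  inter_subset_convexHull := by
    rintro s t ⟨S, k, -, -, rfl⟩ ⟨T, k', -, -, rfl⟩ x ⟨hx1, hx2⟩
    classical
    obtain ⟨g0, g1, gz⟩ := memConvS.1 hx1
    obtain ⟨-, -, gz'⟩ := memConvS.1 hx2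
    have : (↑(S.image pt) ∩ ↑(T.image pt) : Set EE) = ↑((S ∩ T).image pt) := by
      rw [← Finset.coe_inter, Finset.image_inter S T pt_inj]
    rw [this]
    refine memConvS.2 ⟨g0, g1, fun c hc => ?_⟩
    by_cases h : c ∈ S
    · exact gz' c fun h2 => hc (Finset.mem_inter.2 ⟨h, h2⟩)
    · exact gz c h

lemma TriF_face (k : Fin 10) : TriF k ∈ SC.faces := by
  obtain ⟨c, hc⟩ := faceNE k
  exact ⟨clsSet k, k, ⟨c, mem_clsSet.2 hc⟩, Finset.Subset.rfl, rfl⟩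

lemma facesFinite : SC.faces.Finite := by
  apply Set.Finite.subset (Set.finite_range fun S : Finset (Fin 6) => S.image pt)
  rintro F ⟨S, k, -, -, rfl⟩
  exact Set.mem_range_self S

def charF (k : Fin 10) (x : EE) : Prop :=
  (∀ c, 0 ≤ x c) ∧ (∑ c, x c) = 1 ∧ ∀ c, UI k c = none → x c = 0

lemma memTri {k : Fin 10} {x : EE} : x ∈ convexHull ℝ ↑(TriF k) ↔ charF k x := by
  rw [TriF, memConvS]
  refine and_congr_right fun _ => and_congr_right fun _ => forall_congr' fun c => ?_
  rw [mem_clsSet]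
  constructor
  · intro h hn
    exact h (by rw [hn]; simp)
  · intro h hn
    exact h (Option.not_isSome_iff_eq_none.1 (by simpa using hn))

lemma spaceIff {x : EE} : x ∈ SC.space ↔ ∃ k, charF k x := by
  rw [Geometry.SimplicialComplex.mem_space_iff]
  constructor
  · rintro ⟨s, ⟨S, k, -, hsub, rfl⟩, hx⟩
    refine ⟨k, memTri.1 (convexHull_mono ?_ hx)⟩
    exact_mod_cast Finset.image_subset_image hsub
  · rintro ⟨k, hx⟩
    exact ⟨TriF k, TriF_face k, memTri.2 hx⟩

lemma spaceEq : SC.space = ⋃ k : Fin 10, convexHull ℝ ↑(TriF k) := by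
  ext x
  rw [spaceIff, Set.mem_iUnion]
  exact exists_congr fun k => memTri.symm

end
end RP2
end RP2B

section RP2C
namespace RP2
noncomputable section
open scoped Classical

def AV (k : Fin 10) (x : EE) : Fin 3 → ℝ := ∑ c : Fin 6, x c • UV k c

lemma AV_apply (k : Fin 10) (x : EE) (j : Fin 3) :
    AV k x j = ∑ c : Fin 6, x c * UV k c j := by
  rw [AV, Finset.sum_apply]
  rfl

lemma dot_AV (f : Fin 3 → ℝ) (k : Fin 10) (x : EE) :
    dot f (AV k x) = ∑ c : Fin 6, x c * dot f (UV k c) := by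
  simp only [dot, AV_apply, Finset.mul_sum]
  rw [← Finset.sum_add_distrib, ← Finset.sum_add_distrib]
  exact Finset.sum_congr rfl fun c _ => by ring

lemma dnnUV (k : Fin 10) (c : Fin 6) :
    dot (nn k) (UV k c) = if (UI k c).isSome = true then 1 else 0 := by
  rw [dot_nn_sum]
  have hstep : ∀ c' ∈ Finset.univ, dot (mU k c') (UV k c)
      = if c' = c then (if (UI k c').isSome = true then 1 else 0) else 0 := by
    intro c' _
    rw [dot_mU_UV]
    by_cases h : c' = c
    · simp [h]
    · simp [h]
  rw [Finset.sum_congr rfl hstep, Finset.sum_ite_eq' Finset.univ c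
    (fun c' => if (UI k c').isSome = true then 1 else 0), if_pos (Finset.mem_univ c)]

lemma dot_nn_AV {k : Fin 10} {x : EE} (h : charF k x) : dot (nn k) (AV k x) = 1 := by
  rw [dot_AV]
  have hstep : ∀ c ∈ Finset.univ, x c * dot (nn k) (UV k c) = x c := by
    intro c _
    rw [dnnUV]
    by_cases hc : (UI k c).isSome = true
    · rw [if_pos hc, mul_one]
    · rw [if_neg hc, mul_zero, h.2.2 c (Option.not_isSome_iff_eq_none.1 (by simpa using hc))]
  rw [Finset.sum_congr rfl hstep]
  exact h.2.1

lemma AV_ne {k : Fin 10} {x : EE} (h : charF k x) : AV k x ≠ 0 := by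
  intro h0
  have := dot_nn_AV h
  rw [h0] at this
  simp [dot] at this

lemma AV_recover (k : Fin 10) (x : EE) (c : Fin 6) :
    dot (mU k c) (AV k x) = if (UI k c).isSome = true then x c else 0 := by
  rw [dot_AV]
  have hstep : ∀ c' ∈ Finset.univ, x c' * dot (mU k c) (UV k c')
      = if c' = c then (if (UI k c).isSome = true then x c else 0) else 0 := by
    intro c' _
    rw [dot_mU_UV]
    by_cases h : c' = c
    · subst h
      by_cases hs : (UI k c').isSome = true
      · simp [hs]
      · simp [hs]
    · rw [if_neg (fun hh : c = c' ∧ (UI k c).isSome = true => h hh.1.symm), mul_zero,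
        if_neg h]
  rw [Finset.sum_congr rfl hstep, Finset.sum_ite_eq' Finset.univ c _, if_pos (Finset.mem_univ c)]

lemma UV_rel {k k' : Fin 10} {c : Fin 6} (h : (UI k c).isSome = true)
    (h' : (UI k' c).isSome = true) :
    UV k c = (if SrelB k k' then (1:ℝ) else -1) • UV k' c := by
  have hrel := SrelU k k' c h h'
  obtain ⟨t, ht⟩ := Option.isSome_iff_exists.1 h'
  rw [ht] at hrel
  by_cases hb : SrelB k k'
  · rw [if_pos hb] at hrel ⊢
    rw [UV_some hrel, UV_some ht, one_smul]
  · rw [if_neg hb] at hrel ⊢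
    rw [UV_some (by simpa using hrel), UV_some ht]
    funext j
    rw [vant_r]
    simp
lemma agree {k k' : Fin 10} {x : EE} (h : charF k x) (h' : charF k' x) :
    AV k x = (if SrelB k k' then (1:ℝ) else -1) • AV k' x := by
  rw [AV, AV, Finset.smul_sum]
  refine Finset.sum_congr rfl fun c _ => ?_
  by_cases hx : x c = 0
  · rw [hx, zero_smul, zero_smul, smul_zero]
  · have hk : (UI k c).isSome = true := by
      by_contra hn
      exact hx (h.2.2 c (Option.not_isSome_iff_eq_none.1 (by simpa using hn)))
    have hk' : (UI k' c).isSome = true := by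
      by_contra hn
      exact hx (h'.2.2 c (Option.not_isSome_iff_eq_none.1 (by simpa using hn)))
    rw [UV_rel hk hk', smul_comm]

lemma srel_pm (k k' : Fin 10) :
    (if SrelB k k' then (1:ℝ) else -1) = 1 ∨ (if SrelB k k' then (1:ℝ) else -1) = -1 := by
  by_cases h : SrelB k k' <;> simp [h]

def pk (x : EE) : Fin 10 := if h : ∃ k, charF k x then h.choose else 0

lemma pk_spec {x : EE} (h : ∃ k, charF k x) : charF (pk x) x := by
  rw [pk, dif_pos h]
  exact h.choose_spec

def fS (x : SC.space) : ℙ ℝ (Fin 3 → ℝ) :=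
  Projectivization.mk ℝ (AV (pk ↑x) ↑x) (AV_ne (pk_spec (spaceIff.1 x.2)))

lemma fS_eq {x : SC.space} {k : Fin 10} (h : charF k ↑x) :
    fS x = Projectivization.mk ℝ (AV k ↑x) (AV_ne h) := by
  rw [fS, Projectivization.mk_eq_mk_iff']
  exact ⟨_, (agree (pk_spec (spaceIff.1 x.2)) h).symm⟩

/-! ### injectivity -/

lemma bndUV (k k2 : Fin 10) (c : Fin 6) : |dot (nn k) (UV k2 c)| ≤ 1 := by
  cases h : UI k2 c with
  | none => rw [UV_none h]; simp [dot]
  | some t => rw [UV_some h]; exact bndV k t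

lemma absdot {k2 : Fin 10} {x : EE} (h : charF k2 x) (f : Fin 3 → ℝ)
    (hf : ∀ c, |dot f (UV k2 c)| ≤ 1) : |dot f (AV k2 x)| ≤ 1 := by
  rw [dot_AV]
  calc |∑ c : Fin 6, x c * dot f (UV k2 c)| ≤ ∑ c : Fin 6, |x c * dot f (UV k2 c)| :=
        Finset.abs_sum_le_sum_abs _ _
    _ ≤ ∑ c : Fin 6, x c := by
        refine Finset.sum_le_sum fun c _ => ?_
        rw [abs_mul, abs_of_nonneg (h.1 c)]
        calc x c * |dot f (UV k2 c)| ≤ x c * 1 := by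
              exact mul_le_mul_of_nonneg_left (hf c) (h.1 c)
          _ = x c := mul_one _
    _ = 1 := h.2.1

lemma attain {w d : Fin 6 → ℝ} (h0 : ∀ c, 0 ≤ w c) (h1 : ∑ c, w c = 1)
    (hd : ∀ c, d c ≤ 1) (he : ∑ c, w c * d c = 1) : ∀ c, w c = 0 ∨ d c = 1 := by
  have hz : ∑ c : Fin 6, w c * (1 - d c) = 0 := by
    have : ∀ c ∈ Finset.univ, w c * (1 - d c) = w c - w c * d c := fun c _ => by ring
    rw [Finset.sum_congr rfl this, Finset.sum_sub_distrib, h1, he, sub_self]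
  have hh := (Finset.sum_eq_zero_iff_of_nonneg fun c _ =>
    mul_nonneg (h0 c) (by linarith [hd c])).1 hz
  intro c
  rcases mul_eq_zero.1 (hh c (Finset.mem_univ c)) with h | h
  · exact Or.inl h
  · exact Or.inr (by linarith)

lemma keyInj {k k' : Fin 10} {x x' : EE} (h : charF k x) (h' : charF k' x') {a : ℝ}
    (ha : AV k x = a • AV k' x') : x = x' := by
  have h1 : dot (nn k) (AV k x) = 1 := dot_nn_AV h
  have h1' : dot (nn k') (AV k' x') = 1 := dot_nn_AV h'
  have haval : dot (nn k') (AV k x) = a := by rw [ha, dot_smul, h1', mul_one]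
  have habs1 : |a| ≤ 1 := by
    rw [← haval]
    exact absdot h (nn k') (fun c => bndUV k' k c)
  have ha2 : a * dot (nn k) (AV k' x') = 1 := by rw [← dot_smul, ← ha, h1]
  have habs2 : 1 ≤ |a| := by
    rcases le_or_gt 1 |a| with h | hlt
    · exact h
    · exfalso
      have hb := absdot h' (nn k) (fun c => bndUV k k' c)
      have hmul := abs_mul a (dot (nn k) (AV k' x'))
      rw [ha2, abs_one] at hmul
      have h4 : |a| * |dot (nn k) (AV k' x')| ≤ |a| := by
        calc |a| * |dot (nn k) (AV k' x')| ≤ |a| * 1 :=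
              mul_le_mul_of_nonneg_left hb (abs_nonneg a)
          _ = |a| := mul_one _
      linarith
  have hapm : a = 1 ∨ a = -1 := by
    rcases (abs_eq (by norm_num : (0:ℝ) ≤ 1)).1 (le_antisymm habs1 habs2) with h | h
    · exact Or.inl h
    · exact Or.inr h
  -- dichotomy per class
  have hsum1 : ∑ c : Fin 6, x' c * (a * dot (nn k) (UV k' c)) = 1 := by
    rw [← ha2, dot_AV, Finset.mul_sum]
    exact Finset.sum_congr rfl fun c _ => by ring
  have hdle : ∀ c, a * dot (nn k) (UV k' c) ≤ 1 := by
    intro c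
    have := bndUV k k' c
    rcases hapm with rfl | rfl
    · rw [one_mul]; exact (abs_le.1 this).2
    · rw [neg_one_mul]; linarith [(abs_le.1 this).1]
  have hdi := attain h'.1 h'.2.1 hdle hsum1
  have hcls : ∀ c, x' c = 0 ∨
      ((UI k c).isSome = true ∧ (UI k' c).isSome = true ∧ UV k c = a • UV k' c) := by
    intro c
    rcases hdi c with h0 | hd1
    · exact Or.inl h0
    · right
      cases hUc' : UI k' c with
      | none =>
        exfalso
        rw [UV_none hUc'] at hd1
        simp [dot] at hd1
      | some t =>
        have hUV' : UV k' c = V12 t := UV_some hUc'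
        have hct : clsOf t = c := clsUI k' c t hUc'
        rcases hapm with rfl | rfl
        · rw [one_mul, hUV'] at hd1
          have hA := claA_r k t hd1
          rw [hct] at hA
          refine ⟨by rw [hA]; rfl, rfl, ?_⟩
          rw [UV_some hA, hUV', one_smul]
        · rw [neg_one_mul, hUV'] at hd1
          have hB := claB_r k t (by linarith)
          rw [hct] at hB
          refine ⟨by rw [hB]; rfl, rfl, ?_⟩
          rw [UV_some hB, hUV']
          funext j
          rw [vant_r]
          simp
  -- coordinates
  ext c
  by_cases hUc : (UI k c).isSome = true
  · have hx : x c = dot (mU k c) (AV k x) := by rw [AV_recover, if_pos hUc]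
    rw [hx, ha, dot_smul, dot_AV, Finset.mul_sum]
    have hstep : ∀ c' ∈ Finset.univ, a * (x' c' * dot (mU k c) (UV k' c'))
        = if c' = c then x' c' else 0 := by
      intro c' _
      rcases hcls c' with h0 | ⟨hs, hs', hUVr⟩
      · rw [h0]
        simp
      · have : a * dot (mU k c) (UV k' c') = dot (mU k c) (UV k c') := by
          rw [hUVr, dot_smul]
        rw [show a * (x' c' * dot (mU k c) (UV k' c'))
            = x' c' * (a * dot (mU k c) (UV k' c')) by ring, this, dot_mU_UV]
        by_cases hcc : c = c'
        · rw [if_pos ⟨hcc, hUc⟩, if_pos hcc.symm, mul_one]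
        · rw [if_neg (fun hh => hcc hh.1), if_neg (fun hh : c' = c => hcc hh.symm), mul_zero]
    rw [Finset.sum_congr rfl hstep, Finset.sum_ite_eq' Finset.univ c (fun c' => x' c'),
      if_pos (Finset.mem_univ c)]
  · have hn : UI k c = none := Option.not_isSome_iff_eq_none.1 (by simpa using hUc)
    rw [h.2.2 c hn]
    rcases hcls c with h0 | ⟨hs, -, -⟩
    · rw [h0]
    · exact absurd hs hUc

lemma fS_inj : Function.Injective fS := by
  intro x y hxy
  unfold fS at hxy
  rw [Projectivization.mk_eq_mk_iff'] at hxy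
  obtain ⟨a, ha⟩ := hxy
  exact Subtype.ext (keyInj (pk_spec (spaceIff.1 x.2)) (pk_spec (spaceIff.1 y.2)) ha.symm)

lemma cramerU (k : Fin 10) (v : Fin 3 → ℝ) :
    ∑ c : Fin 6, dot (mU k c) v • UV k c = v := by
  funext j
  rw [Finset.sum_apply]
  simp only [Pi.smul_apply, smul_eq_mul]
  have hstep : ∀ c ∈ Finset.univ, dot (mU k c) v * UV k c j
      = ∑ i : Fin 3, (mU k c i * UV k c j) * v i := by
    intro c _
    rw [dot_eq_sum, Finset.sum_mul]
    exact Finset.sum_congr rfl fun i _ => by ring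
  have hstep2 : ∀ i ∈ Finset.univ, (∑ c : Fin 6, (mU k c i * UV k c j) * v i)
      = (if i = j then 1 else 0) * v i := by
    intro i _
    rw [← Finset.sum_mul, mid]
  have hstep3 : ∀ i ∈ Finset.univ, (if i = j then (1:ℝ) else 0) * v i
      = if i = j then v i else 0 := by
    intro i _
    by_cases h : i = j
    · simp [h]
    · simp [h]
  calc ∑ c : Fin 6, dot (mU k c) v * UV k c j
      = ∑ c : Fin 6, ∑ i : Fin 3, (mU k c i * UV k c j) * v i := Finset.sum_congr rfl hstep
    _ = ∑ i : Fin 3, ∑ c : Fin 6, (mU k c i * UV k c j) * v i := Finset.sum_comm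
    _ = ∑ i : Fin 3, (if i = j then 1 else 0) * v i := Finset.sum_congr rfl hstep2
    _ = ∑ i : Fin 3, (if i = j then v i else 0) := Finset.sum_congr rfl hstep3
    _ = v j := by rw [Finset.sum_ite_eq' Finset.univ j v]; exact if_pos (Finset.mem_univ j)


/-! ### surjectivity -/

lemma fS_surj : Function.Surjective fS := by
  intro p
  induction p using Projectivization.ind with
  | h v hv =>
  obtain ⟨k, -, hk⟩ := Finset.exists_max_image Finset.univ (fun k => |dot (nn k) v|)
    ⟨0, Finset.mem_univ 0⟩
  have hk' : ∀ k', |dot (nn k') v| ≤ |dot (nn k) v| := fun k' => hk k' (Finset.mem_univ k')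
  set μ := |dot (nn k) v| with hμdef
  have hμpos : 0 < μ := by
    rcases lt_or_ge 0 μ with h | h
    · exact h
    · exfalso
      apply hv
      apply spanN
      intro k'
      have := hk' k'
      have h2 : |dot (nn k') v| ≤ 0 := le_trans this h
      exact abs_eq_zero.1 (le_antisymm h2 (abs_nonneg _))
  set s : ℝ := if 0 ≤ dot (nn k) v then 1 else -1 with hsdef
  have hsμ : s * dot (nn k) v = μ := by
    rw [hsdef, hμdef]
    by_cases h : 0 ≤ dot (nn k) v
    · rw [if_pos h, one_mul, abs_of_nonneg h]
    · rw [if_neg h, neg_one_mul, abs_of_neg (lt_of_not_ge h)]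
  have hspm : s = 1 ∨ s = -1 := by
    rw [hsdef]
    by_cases h : 0 ≤ dot (nn k) v
    · exact Or.inl (if_pos h)
    · exact Or.inr (if_neg h)
  have hs2 : s * s = 1 := by rcases hspm with h | h <;> rw [h] <;> norm_num
  set x : EE := WithLp.toLp 2 (fun c => s * dot (mU k c) v / μ : Fin 6 → ℝ) with hxdef
  have hxc : ∀ c, x c = s * dot (mU k c) v / μ := fun c => rfl
  have hsupp : ∀ c, UI k c = none → x c = 0 := by
    intro c hc
    rw [hxc, mUz_r k c hc]
    simp [dot]
  have hnonneg : ∀ c, 0 ≤ x c := by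
    intro c
    by_cases hc : (UI k c).isSome = true
    · rw [hxc]
      apply div_nonneg _ (le_of_lt hμpos)
      have hdot : dot (mU k c) v
          = nbT k c * (dot (nn k) v - nbS k c * dot (nn (nbF k c)) v) := by
        simp only [dot]
        rw [nbr_r k c hc 0, nbr_r k c hc 1, nbr_r k c hc 2]
        ring
      rw [hdot]
      have h1 : s * (nbT k c * (dot (nn k) v - nbS k c * dot (nn (nbF k c)) v))
          = nbT k c * (μ - (s * nbS k c) * dot (nn (nbF k c)) v) := by
        rw [← hsμ]; ring
      rw [h1]
      apply mul_nonneg (le_of_lt (nbT_pos k c))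
      have habs : (s * nbS k c) * dot (nn (nbF k c)) v ≤ μ := by
        have hpm : s * nbS k c = 1 ∨ s * nbS k c = -1 := by
          rcases hspm with h1 | h1 <;> rcases nbS_pm k c with h2 | h2 <;> rw [h1, h2] <;> norm_num
        have := hk' (nbF k c)
        rcases hpm with h | h <;> rw [h]
        · rw [one_mul]
          exact le_trans (le_abs_self _) this
        · rw [neg_one_mul]
          exact le_trans (neg_le_abs _) this
      linarith
    · rw [hsupp c (Option.not_isSome_iff_eq_none.1 (by simpa using hc))]
  have hsum : ∑ c, x c = 1 := by
    have : ∀ c ∈ Finset.univ, x c = s * dot (mU k c) v / μ := fun c _ => hxc c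
    rw [Finset.sum_congr rfl this, ← Finset.sum_div, ← Finset.mul_sum, ← dot_nn_sum, hsμ]
    exact div_self (ne_of_gt hμpos)
  have hchar : charF k x := ⟨hnonneg, hsum, hsupp⟩
  have hAV : AV k x = (s / μ) • v := by
    funext j
    rw [AV_apply]
    have hc := congrFun (cramerU k v) j
    rw [Finset.sum_apply] at hc
    simp only [Pi.smul_apply, smul_eq_mul] at hc
    have : ∀ c ∈ Finset.univ, x c * UV k c j = (s / μ) * (dot (mU k c) v * UV k c j) := by
      intro c _
      rw [hxc]
      ring
    rw [Finset.sum_congr rfl this, ← Finset.mul_sum, hc]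
    rfl
  refine ⟨⟨x, spaceIff.2 ⟨k, hchar⟩⟩, ?_⟩
  rw [fS_eq hchar, Projectivization.mk_eq_mk_iff']
  exact ⟨s / μ, hAV.symm⟩

end
end RP2
end RP2C

section RP2D
namespace RP2
noncomputable section
open scoped Classical

/-! ### ℙ is Hausdorff -/

lemma dot_self_pos {v : Fin 3 → ℝ} (hv : v ≠ 0) : 0 < dot v v := by
  have h0 : 0 ≤ dot v v := by
    rw [dot]
    nlinarith [mul_self_nonneg (v 0), mul_self_nonneg (v 1), mul_self_nonneg (v 2)]
  rcases h0.lt_or_eq with h | h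
  · exact h
  · exfalso
    apply hv
    have h0' : v 0 * v 0 + v 1 * v 1 + v 2 * v 2 = 0 := by rw [← dot]; exact h.symm
    have e0 : v 0 = 0 := by nlinarith [sq_nonneg (v 0), sq_nonneg (v 1), sq_nonneg (v 2)]
    have e1 : v 1 = 0 := by nlinarith [sq_nonneg (v 0), sq_nonneg (v 1), sq_nonneg (v 2)]
    have e2 : v 2 = 0 := by nlinarith [sq_nonneg (v 0), sq_nonneg (v 1), sq_nonneg (v 2)]
    funext j
    fin_cases j
    · exact e0
    · exact e1
    · exact e2

def PEraw (v : { w : Fin 3 → ℝ // w ≠ 0 }) : Fin 3 → Fin 3 → ℝ :=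
  fun i j => v.1 i * v.1 j / dot v.1 v.1

lemma PEraw_sound : ∀ (a b : { w : Fin 3 → ℝ // w ≠ 0 }),
    (projectivizationSetoid ℝ (Fin 3 → ℝ)).r a b → PEraw a = PEraw b := by
  rintro ⟨a, ha⟩ ⟨b, hb⟩ hab
  obtain ⟨u, hu⟩ := hab
  have hu' : (u : ℝ) • b = a := hu
  have hne : (u : ℝ) ≠ 0 := Units.ne_zero u
  funext i j
  rw [PEraw, PEraw]
  simp only
  rw [← hu']
  have hd : dot ((u:ℝ) • b) ((u:ℝ) • b) = (u:ℝ)^2 * dot b b := by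
    simp [dot, Pi.smul_apply, smul_eq_mul]; ring
  rw [hd]
  have hbb := dot_self_pos hb
  field_simp
  simp only [Pi.smul_apply, smul_eq_mul]
  ring

def PE : ℙ ℝ (Fin 3 → ℝ) → (Fin 3 → Fin 3 → ℝ) := Quotient.lift PEraw PEraw_sound

lemma PE_mk (v : Fin 3 → ℝ) (hv : v ≠ 0) :
    PE (Projectivization.mk ℝ v hv) = fun i j => v i * v j / dot v v := rfl

lemma PE_inj : Function.Injective PE := by
  intro p q
  induction p using Projectivization.ind with
  | h v hv =>
  induction q using Projectivization.ind with
  | h w hw =>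
  intro h
  rw [PE_mk, PE_mk] at h
  have hvv := dot_self_pos hv
  have hww := dot_self_pos hw
  -- find coordinate with w i0 ≠ 0
  have hex : ∃ i0, w i0 ≠ 0 := by
    by_contra hc
    push_neg at hc
    exact hw (funext fun j => hc j)
  obtain ⟨i0, hi0⟩ := hex
  have hdiag := congrFun (congrFun h i0) i0
  have hvi0 : v i0 ≠ 0 := by
    intro h0
    rw [h0] at hdiag
    have hd2 : w i0 * w i0 / dot w w = 0 := by rw [← hdiag]; ring
    rw [div_eq_zero_iff] at hd2
    rcases hd2 with h | h
    · exact hi0 (mul_self_eq_zero.1 h)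
    · exact (ne_of_gt hww) h
  rw [Projectivization.mk_eq_mk_iff']
  refine ⟨v i0 / w i0, ?_⟩
  funext j
  have hj := congrFun (congrFun h i0) j
  -- v i0 * v j / dot v v = w i0 * w j / dot w w
  have hdd : v i0 * v i0 / dot v v = w i0 * w i0 / dot w w := hdiag
  -- compute
  simp only [Pi.smul_apply, smul_eq_mul]
  rw [div_mul_eq_mul_div, eq_comm, eq_div_iff hi0]
  -- goal : v j * w i0 = v i0 * w j
  have h1 : v i0 * v j * dot w w = w i0 * w j * dot v v := by
    rw [div_eq_div_iff (ne_of_gt hvv) (ne_of_gt hww)] at hj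
    linarith [hj]
  have h2 : v i0 * v i0 * dot w w = w i0 * w i0 * dot v v := by
    rw [div_eq_div_iff (ne_of_gt hvv) (ne_of_gt hww)] at hdd
    linarith [hdd]
  have hkey : v j * w i0 * (w i0 * dot v v) = v i0 * w j * (w i0 * dot v v) := by
    calc v j * w i0 * (w i0 * dot v v)
        = (w i0 * w i0 * dot v v) * v j := by ring
      _ = (v i0 * v i0 * dot w w) * v j := by rw [h2]
      _ = (v i0 * v j * dot w w) * v i0 := by ring
      _ = (w i0 * w j * dot v v) * v i0 := by rw [h1]
      _ = v i0 * w j * (w i0 * dot v v) := by ring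
  exact mul_right_cancel₀ (mul_ne_zero hi0 (ne_of_gt hvv)) hkey

instance : T2Space (ℙ ℝ (Fin 3 → ℝ)) :=
  T2Space.of_injective_continuous PE_inj
    (Continuous.quotient_lift (by
      apply continuous_pi
      intro i
      apply continuous_pi
      intro j
      apply Continuous.div
      · exact ((continuous_apply i).comp continuous_subtype_val).mul
          ((continuous_apply j).comp continuous_subtype_val)
      · have hc : ∀ i : Fin 3, Continuous fun v : { w : Fin 3 → ℝ // w ≠ 0 } => v.1 i :=
          fun i => (continuous_apply i).comp continuous_subtype_val
        simp only [dot]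
        exact (((hc 0).mul (hc 0)).add ((hc 1).mul (hc 1))).add ((hc 2).mul (hc 2))
      · exact fun v => ne_of_gt (dot_self_pos v.2)) _)

/-! ### continuity of fS -/

lemma contCoord (c : Fin 6) : Continuous fun x : EE => x c := by
  have h1 : Continuous fun x : EE => (WithLp.equiv 2 (Fin 6 → ℝ) x : Fin 6 → ℝ) :=
    PiLp.continuous_ofLp (p := 2) (β := fun _ : Fin 6 => ℝ)
  exact (continuous_apply c).comp h1

lemma contAV (k : Fin 10) : Continuous fun x : EE => AV k x := by
  simp only [AV]
  apply continuous_finset_sum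
  intro c _
  exact (contCoord c).smul continuous_const

lemma cont_of_cover {X Y : Type*} [TopologicalSpace X] [TopologicalSpace Y] {f : X → Y}
    (C : Fin 10 → Set X) (hC : ∀ k, IsClosed (C k)) (hcov : ∀ x, ∃ k, x ∈ C k)
    (hf : ∀ k, ContinuousOn f (C k)) : Continuous f := by
  rw [continuous_iff_isClosed]
  intro Z hZ
  have : f ⁻¹' Z = ⋃ k, C k ∩ f ⁻¹' Z := by
    ext x
    constructor
    · intro hx
      obtain ⟨k, hk⟩ := hcov x
      exact Set.mem_iUnion.2 ⟨k, hk, hx⟩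
    · intro hx
      obtain ⟨k, -, hx⟩ := Set.mem_iUnion.1 hx
      exact hx
  rw [this]
  exact isClosed_iUnion_of_finite fun k => (hf k).preimage_isClosed_of_isClosed (hC k) hZ

lemma fS_cont : Continuous fS := by
  apply cont_of_cover (C := fun k => {x : SC.space | charF k ↑x})
  · intro k
    have : {x : SC.space | charF k ↑x}
        = Subtype.val ⁻¹' (convexHull ℝ ↑(TriF k)) := by
      ext x
      simp only [Set.mem_setOf_eq, Set.mem_preimage]
      exact memTri.symm
    rw [this]
    exact ((((TriF k).finite_toSet).isCompact_convexHull ℝ).isClosed).preimage continuous_subtype_val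
  · intro x
    exact spaceIff.1 x.2
  · intro k
    rw [continuousOn_iff_continuous_restrict]
    have : Set.domRestrict {x : SC.space | charF k ↑x} fS
        = fun y : {x : SC.space | charF k ↑x} =>
            Projectivization.mk ℝ (AV k ↑↑y) (AV_ne (show charF k (↑↑y : EE) from y.2)) := by
      funext y
      exact fS_eq (show charF k (↑↑y : EE) from y.2)
    rw [this]
    have hcont : Continuous fun y : {x : SC.space | charF k ↑x} =>
        (⟨AV k ↑↑y, AV_ne (show charF k (↑↑y : EE) from y.2)⟩ : { w : Fin 3 → ℝ // w ≠ 0 }) := by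
      apply Continuous.subtype_mk
      exact (contAV k).comp (continuous_subtype_val.comp continuous_subtype_val)
    exact continuous_quot_mk.comp hcont

/-! ### the homeomorphism -/

instance : CompactSpace SC.space := by
  rw [← isCompact_iff_compactSpace]
  rw [spaceEq]
  exact isCompact_iUnion fun k => ((TriF k).finite_toSet).isCompact_convexHull ℝ

def eqvF : SC.space ≃ ℙ ℝ (Fin 3 → ℝ) := Equiv.ofBijective fS ⟨fS_inj, fS_surj⟩

def homF : SC.space ≃ₜ ℙ ℝ (Fin 3 → ℝ) := Continuous.homeoOfEquivCompactToT2 (f := eqvF) fS_cont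

lemma homF_apply (x : SC.space) : homF x = fS x := rfl

lemma homF_symm_fS (x : SC.space) : homF.symm (fS x) = x := by
  have : fS x = homF x := rfl
  rw [this, Homeomorph.symm_apply_apply]

end
end RP2
end RP2D

section RP2E
namespace RP2
noncomputable section
open scoped Classical

/-! ### the action, combinatorially -/

def Dg (gi : Fin 4) (v : Fin 3 → ℝ) : Fin 3 → ℝ := fun j => gsgn gi j * v j

lemma Dg_ne {gi : Fin 4} {v : Fin 3 → ℝ} (hv : v ≠ 0) : Dg gi v ≠ 0 := by
  intro h0
  apply hv
  funext j
  have := congrFun h0 j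
  rw [Dg] at this
  simp only [Pi.zero_apply] at this ⊢
  rcases mul_eq_zero.1 this with h | h
  · exact absurd h (gsgn_ne gi j)
  · exact h

def giOf (g : ZMod 2 × ZMod 2) : Fin 4 :=
  if g.1 = 0 then (if g.2 = 0 then 0 else 1) else (if g.2 = 0 then 2 else 3)

lemma sgn0 : sgn 0 = 1 := by simp [sgn]
lemma sgn1 : sgn 1 = -1 := by rw [sgn, if_neg (by decide)]

lemma stdSign_eq (g : ZMod 2 × ZMod 2) : stdSign 2 ![g.1, g.2] = gsgn (giOf g) := by
  obtain ⟨g1, g2⟩ := g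
  have key : ∀ (a b : ZMod 2) (gi : Fin 4), giOf (a, b) = gi →
      sgn a = gsgn gi 1 → sgn b = gsgn gi 2 → stdSign 2 ![a, b] = gsgn (giOf (a, b)) := by
    intro a b gi hgi h1 h2
    rw [show giOf (a, b) = gi from hgi]
    funext j
    fin_cases j
    · show (1 : ℝ) = gsgn gi 0
      rw [gsgn, z_gsz0]
      norm_num
    · show sgn a = gsgn gi 1
      exact h1
    · show sgn b = gsgn gi 2
      exact h2
  fin_cases g1 <;> fin_cases g2
  · exact key 0 0 0 (by decide) (by rw [sgn0, gsgn]; norm_num [gsz, Matrix.vecHead, Matrix.vecTail, Matrix.cons_val_zero, Matrix.cons_val_one, Matrix.cons_val_two, Matrix.head_cons]) (by rw [sgn0, gsgn]; norm_num [gsz, Matrix.vecHead, Matrix.vecTail, Matrix.cons_val_zero, Matrix.cons_val_one, Matrix.cons_val_two, Matrix.head_cons])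
  · exact key 0 1 1 (by decide) (by rw [sgn0, gsgn]; norm_num [gsz, Matrix.vecHead, Matrix.vecTail, Matrix.cons_val_zero, Matrix.cons_val_one, Matrix.cons_val_two, Matrix.head_cons]) (by rw [sgn1, gsgn]; norm_num [gsz, Matrix.vecHead, Matrix.vecTail, Matrix.cons_val_zero, Matrix.cons_val_one, Matrix.cons_val_two, Matrix.head_cons])
  · exact key 1 0 2 (by decide) (by rw [sgn1, gsgn]; norm_num [gsz, Matrix.vecHead, Matrix.vecTail, Matrix.cons_val_zero, Matrix.cons_val_one, Matrix.cons_val_two, Matrix.head_cons]) (by rw [sgn0, gsgn]; norm_num [gsz, Matrix.vecHead, Matrix.vecTail, Matrix.cons_val_zero, Matrix.cons_val_one, Matrix.cons_val_two, Matrix.head_cons])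
  · exact key 1 1 3 (by decide) (by rw [sgn1, gsgn, show gsz 3 1 = -1 by decide]; norm_num) (by rw [sgn1, gsgn, show gsz 3 2 = -1 by decide]; norm_num)

lemma rp2_mk (g : ZMod 2 × ZMod 2) (v : Fin 3 → ℝ) (hv : v ≠ 0) :
    rp2StdAction g (Projectivization.mk ℝ v hv)
      = Projectivization.mk ℝ (Dg (giOf g) v) (Dg_ne hv) := by
  unfold rp2StdAction rpStdAction
  rw [Projectivization.map_mk]
  rw [Projectivization.mk_eq_mk_iff']
  refine ⟨1, ?_⟩
  rw [one_smul]
  funext j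
  show Dg (giOf g) v j = stdSign 2 ![g.1, g.2] j * v j
  rw [stdSign_eq]
  rfl

/-! ### the action on the complex -/

def Pg (gi : Fin 4) (x : EE) : EE := WithLp.toLp 2 (fun c => x (piF gi c) : Fin 6 → ℝ)

lemma Pg_apply (gi : Fin 4) (x : EE) (c : Fin 6) : Pg gi x c = x (piF gi c) := rfl

def piEquiv (gi : Fin 4) : Equiv.Perm (Fin 6) :=
  ⟨piF gi, piF gi, fun c => piFinvol gi c, fun c => piFinvol gi c⟩

lemma sum_perm (gi : Fin 4) (f : Fin 6 → ℝ) : ∑ c, f (piF gi c) = ∑ c, f c :=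
  Equiv.sum_comp (piEquiv gi) f

lemma charPg {gi : Fin 4} {k : Fin 10} {x : EE} (h : charF k x) :
    charF (sigmaF gi k) (Pg gi x) := by
  refine ⟨fun c => h.1 _, ?_, ?_⟩
  · rw [show (∑ c, Pg gi x c) = ∑ c, x (piF gi c) from rfl, sum_perm]
    exact h.2.1
  · intro c hc
    have hu := uactD gi k (piF gi c)
    rw [piFinvol, hc] at hu
    rw [Pg_apply]
    apply h.2.2
    cases hUI : UI k (piF gi c) with
    | none => rfl
    | some t => rw [hUI] at hu; simp at hu

lemma UVact (gi : Fin 4) (k : Fin 10) (c : Fin 6) :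
    UV (sigmaF gi k) (piF gi c) = epsF gi k • Dg gi (UV k c) := by
  have hu := uactD gi k c
  cases h : UI k c with
  | none =>
    rw [h] at hu
    simp only [Option.map_none] at hu
    rw [UV_none hu, UV_none h]
    funext j
    simp [Dg]
  | some t =>
    rw [h] at hu
    simp only [Option.map_some] at hu
    by_cases he : epsB gi k
    · rw [if_pos he] at hu
      rw [UV_some hu, UV_some h, epsF, if_pos he, one_smul]
      funext j
      rw [gact_r]
      rfl
    · rw [if_neg he] at hu
      rw [UV_some hu, UV_some h, epsF, if_neg he]
      funext j
      rw [vant_r, gact_r]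
      show -(gsgn gi j * V12 t j) = ((-1 : ℝ) • Dg gi (V12 t)) j
      simp only [Pi.smul_apply, smul_eq_mul, Dg]
      ring

lemma AVPg (gi : Fin 4) (k : Fin 10) (x : EE) :
    AV (sigmaF gi k) (Pg gi x) = epsF gi k • Dg gi (AV k x) := by
  rw [AV, AV]
  have hre : ∑ c : Fin 6, Pg gi x c • UV (sigmaF gi k) c
      = ∑ c : Fin 6, Pg gi x (piF gi c) • UV (sigmaF gi k) (piF gi c) :=
    (Equiv.sum_comp (piEquiv gi) fun c => Pg gi x c • UV (sigmaF gi k) c).symm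
  rw [hre]
  have hterm : ∀ c ∈ Finset.univ, Pg gi x (piF gi c) • UV (sigmaF gi k) (piF gi c)
      = epsF gi k • (x c • Dg gi (UV k c)) := by
    intro c _
    rw [Pg_apply, piFinvol, UVact, smul_comm]
  rw [Finset.sum_congr rfl hterm, ← Finset.smul_sum]
  congr 1
  funext j
  rw [Finset.sum_apply]
  show ∑ c : Fin 6, (x c • Dg gi (UV k c)) j = gsgn gi j * (∑ c : Fin 6, x c • UV k c) j
  rw [Finset.sum_apply, Finset.mul_sum]
  refine Finset.sum_congr rfl fun c _ => ?_
  show x c * (gsgn gi j * UV k c j) = gsgn gi j * (x c * UV k c j)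
  ring

lemma conj_eq (g : ZMod 2 × ZMod 2) (x : SC.space) :
    (homF.symm (rp2StdAction g (homF x)) : EE) = Pg (giOf g) ↑x := by
  have hk := pk_spec (spaceIff.1 x.2)
  have hchar' : charF (sigmaF (giOf g) (pk ↑x)) (Pg (giOf g) ↑x) := charPg hk
  have h2 : rp2StdAction g (homF x)
      = Projectivization.mk ℝ (Dg (giOf g) (AV (pk ↑x) ↑x)) (Dg_ne (AV_ne hk)) := by
    rw [show homF x = fS x from rfl, show fS x = Projectivization.mk ℝ (AV (pk ↑x) ↑x)
      (AV_ne (pk_spec (spaceIff.1 x.2))) from rfl, rp2_mk]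
  have h3 : fS ⟨Pg (giOf g) ↑x, spaceIff.2 ⟨_, hchar'⟩⟩
      = Projectivization.mk ℝ (Dg (giOf g) (AV (pk ↑x) ↑x)) (Dg_ne (AV_ne hk)) := by
    rw [fS_eq hchar', Projectivization.mk_eq_mk_iff']
    exact ⟨epsF (giOf g) (pk ↑x), (AVPg (giOf g) (pk ↑x) ↑x).symm⟩
  rw [h2, ← h3, homF_symm_fS]

lemma Pg_pt (gi : Fin 4) (c : Fin 6) : Pg gi (pt c) = pt (piF gi c) := by
  ext c'
  rw [Pg_apply, pt_apply, pt_apply]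
  by_cases h : piF gi c' = c
  · rw [if_pos h, if_pos (by rw [← h, piFinvol])]
  · rw [if_neg h, if_neg (fun hh => h (by rw [hh, piFinvol]))]

lemma Pg_linear (gi : Fin 4) : IsLinearMap ℝ (Pg gi) :=
  ⟨fun x y => rfl, fun r x => rfl⟩

lemma conv_sub_space {S : Finset (Fin 6)} {k : Fin 10} (hne : S.Nonempty) (hsub : S ⊆ clsSet k) :
    convexHull ℝ ↑(S.image pt) ⊆ SC.space :=
  Geometry.SimplicialComplex.convexHull_subset_space ⟨S, k, hne, hsub, rfl⟩

lemma image_eq (g : ZMod 2 × ZMod 2) (S : Finset (Fin 6)) (k : Fin 10)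
    (hne : S.Nonempty) (hsub : S ⊆ clsSet k) :
    (fun x : SC.space => (homF.symm (rp2StdAction g (homF x)) : EE)) ''
        {x : SC.space | (x : EE) ∈ convexHull ℝ ↑(S.image pt)}
      = convexHull ℝ ↑((S.image (piF (giOf g))).image pt) := by
  rw [Set.image_congr (fun x _ => conj_eq g x)]
  rw [show (fun x : SC.space => Pg (giOf g) ↑x) = Pg (giOf g) ∘ Subtype.val from rfl,
    Set.image_comp]
  have hval : Subtype.val '' {x : SC.space | (x : EE) ∈ convexHull ℝ ↑(S.image pt)}
      = convexHull ℝ ↑(S.image pt) := by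
    ext y
    constructor
    · rintro ⟨x, hx, rfl⟩
      exact hx
    · intro hy
      exact ⟨⟨y, conv_sub_space hne hsub hy⟩, hy, rfl⟩
  rw [hval, (Pg_linear (giOf g)).image_convexHull]
  congr 1
  rw [← Finset.coe_image, Finset.image_image, Finset.image_image]
  have hcomp : Pg (giOf g) ∘ pt = pt ∘ piF (giOf g) := funext fun c => Pg_pt (giOf g) c
  rw [hcomp]

/-! ### vertices -/

lemma vertEq : SC.vertices = Set.range pt := by
  ext x
  constructor
  · rintro ⟨S, k, hne, hsub, hx⟩
    obtain ⟨c, hc⟩ := hne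
    have : pt c ∈ S.image pt := Finset.mem_image_of_mem pt hc
    rw [← hx] at this
    rw [Finset.mem_singleton] at this
    exact ⟨c, this⟩
  · rintro ⟨c, rfl⟩
    obtain ⟨k, hk⟩ := allcls c
    refine ⟨{c}, k, ⟨c, Finset.mem_singleton_self c⟩, ?_, ?_⟩
    · rw [Finset.singleton_subset_iff, mem_clsSet]
      exact hk
    · rw [Finset.image_singleton]

lemma vertCount : SC.vertices.ncard = 6 := by
  rw [vertEq]
  have hre : Set.range pt = ↑(Finset.univ.image pt) := by
    ext y
    simp
  rw [hre, Set.ncard_coe_finset, Finset.card_image_of_injective _ pt_inj, Finset.card_univ]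
  rfl

/-! ### no fixed vertices -/

def gOf : Fin 4 → ZMod 2 × ZMod 2 := ![(0, 0), (0, 1), (1, 0), (1, 1)]

lemma giOf_gOf : ∀ gi : Fin 4, giOf (gOf gi) = gi := by decide

def giCh : Fin 12 → Fin 4 := ![1, 1, 1, 1, 2, 2, 1, 1, 1, 1, 2, 2]
def jA : Fin 12 → Fin 3 := ![1, 1, 0, 0, 0, 0, 1, 1, 0, 0, 0, 0]
def jB : Fin 12 → Fin 3 := ![2, 2, 2, 2, 1, 1, 2, 2, 2, 2, 1, 1]

lemma z_fix : ∀ t : Fin 12, Vz t (jA t) ≠ 0 ∧ Vz t (jB t) ≠ 0 ∧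
    gsz (giCh t) (jA t) = 1 ∧ gsz (giCh t) (jB t) = -1 := by decide

lemma V12_ne (t : Fin 12) : V12 t ≠ 0 := by
  intro h0
  have := congrFun h0 (jA t)
  rw [V12] at this
  simp only [Pi.zero_apply] at this
  exact (z_fix t).1 (by exact_mod_cast this)

lemma notfix (t : Fin 12) : ∃ g : ZMod 2 × ZMod 2,
    rp2StdAction g (Projectivization.mk ℝ (V12 t) (V12_ne t))
      ≠ Projectivization.mk ℝ (V12 t) (V12_ne t) := by
  refine ⟨gOf (giCh t), ?_⟩
  rw [rp2_mk, giOf_gOf, Ne, Projectivization.mk_eq_mk_iff']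
  rintro ⟨a, ha⟩
  obtain ⟨hA, hB, hgA, hgB⟩ := z_fix t
  have hVA : V12 t (jA t) ≠ 0 := fun h => hA (by rw [V12] at h; exact_mod_cast h)
  have hVB : V12 t (jB t) ≠ 0 := fun h => hB (by rw [V12] at h; exact_mod_cast h)
  have h1 := congrFun ha (jA t)
  have h2 := congrFun ha (jB t)
  simp only [Pi.smul_apply, smul_eq_mul] at h1 h2
  rw [show Dg (giCh t) (V12 t) (jA t) = gsgn (giCh t) (jA t) * V12 t (jA t) from rfl] at h1
  rw [show Dg (giCh t) (V12 t) (jB t) = gsgn (giCh t) (jB t) * V12 t (jB t) from rfl] at h2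
  simp only [gsgn] at h1 h2
  rw [hgA] at h1
  rw [hgB] at h2
  push_cast at h1 h2
  have ha1 : a = 1 := by
    apply mul_right_cancel₀ hVA
    rw [one_mul]
    linarith [h1]
  have hVB0 : V12 t (jB t) = 0 := by
    rw [ha1, one_mul] at h2
    linarith [h2]
  exact hVB hVB0

end
end RP2
end RP2E

section RP2F
namespace RP2
noncomputable section
open scoped Classical

lemma AV_pt {k : Fin 10} {c : Fin 6} {t : Fin 12} (ht : UI k c = some t) :
    AV k (pt c) = V12 t := by
  funext j
  rw [AV_apply]
  have hstep : ∀ c' ∈ Finset.univ, pt c c' * UV k c' j = if c' = c then UV k c j else 0 := by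
    intro c' _
    rw [pt_apply]
    by_cases h : c' = c
    · rw [if_pos h, if_pos h, h, one_mul]
    · rw [if_neg h, if_neg h, zero_mul]
  rw [Finset.sum_congr rfl hstep, Finset.sum_ite_eq' Finset.univ c _,
    if_pos (Finset.mem_univ c), UV_some ht]

lemma vertex_not_fixed (x : SC.space) (hx : (x : EE) ∈ SC.vertices) :
    ∃ g : ZMod 2 × ZMod 2, rp2StdAction g (homF x) ≠ homF x := by
  rw [vertEq] at hx
  obtain ⟨c, hc⟩ := hx
  have hk := pk_spec (spaceIff.1 x.2)
  have hco : (↑x : EE) c = 1 := by rw [← hc, pt_apply, if_pos rfl]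
  have hsome : (UI (pk ↑x) c).isSome = true := by
    by_contra hn
    have h0 := hk.2.2 c (Option.not_isSome_iff_eq_none.1 (by simpa using hn))
    rw [h0] at hco
    norm_num at hco
  obtain ⟨t, ht⟩ := Option.isSome_iff_exists.1 hsome
  have hAV : AV (pk ↑x) ↑x = V12 t := by
    have h2 := AV_pt (k := pk (↑x : EE)) ht
    rw [hc] at h2
    exact h2
  have hfs : homF x = Projectivization.mk ℝ (V12 t) (V12_ne t) := by
    rw [show homF x = Projectivization.mk ℝ (AV (pk ↑x) ↑x)
      (AV_ne (pk_spec (spaceIff.1 x.2))) from rfl]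
    rw [Projectivization.mk_eq_mk_iff']
    exact ⟨1, by rw [one_smul, ← hAV]⟩
  obtain ⟨g, hg⟩ := notfix t
  refine ⟨g, ?_⟩
  rw [hfs]
  exact hg

end
end RP2
end RP2F


/-- `ℝP²` with its standard `ℤ₂²`-action admits a `ℤ₂²`-equivariant triangulation with exactly
`6` vertices, none of which is a fixed point of the action. -/
theorem rp2_equivariant_triangulation_six_vertices_no_fixed_vertex :
    ∃ T : Triangulation (ℙ ℝ (Fin 3 → ℝ)), T.IsEquivariant rp2StdAction ∧
      T.complex.vertices.ncard = 6 ∧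
      ∀ x : T.complex.space, (x : EuclideanSpace ℝ (Fin T.dim)) ∈ T.complex.vertices →
        ∃ g : ZMod 2 × ZMod 2, rp2StdAction g (T.homeo x) ≠ T.homeo x := by
  classical
  refine ⟨⟨6, RP2.SC, RP2.facesFinite, RP2.homF⟩, ?_, RP2.vertCount, ?_⟩
  · intro g s hs
    obtain ⟨S, k, hne, hsub, rfl⟩ := hs
    refine ⟨(S.image (RP2.piF (RP2.giOf g))).image RP2.pt,
      ⟨S.image (RP2.piF (RP2.giOf g)), RP2.sigmaF (RP2.giOf g) k, hne.image _, ?_, rfl⟩, ?_⟩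
    · intro c' hc'
      obtain ⟨c, hc, rfl⟩ := Finset.mem_image.1 hc'
      rw [RP2.mem_clsSet]
      have hu := RP2.uactD (RP2.giOf g) k c
      have hcs : (RP2.UI k c).isSome = true := RP2.mem_clsSet.1 (hsub hc)
      obtain ⟨t, ht⟩ := Option.isSome_iff_exists.1 hcs
      rw [ht] at hu
      rw [hu]
      rfl
    · exact RP2.image_eq g S k hne hsub
  · intro x hx
    exact RP2.vertex_not_fixed x hx
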